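/- Let B = (b_1, …, b_n) ∈ ℝ^{m×n} be a basis with n = pk + d for integers p ≥ 1, d ≥ k ≥ 2, let δ ≥ 1, and let γ_k ≥ 1 be an admissible Hermite bound for rank k. Assume that for each i ∈ [0, p−1] the block B_{[ik+d+1,(i+1)k+d]} is δ-SVP-reduced, and for each i ∈ [0, p−2] the block B_{[ik+d+2,(i+1)k+d+1]} is δ-DSVP-reduced. Then B_{[d+1,n]} is δ(δ²γ_k)^{(n−d−k)/(k−1)}-SVP-reduced, i.e., ‖b*_{d+1}‖ ≤ δ·(δ²γ_k)^{(n−d−k)/(k−1)} · λ_1(L(B_{[d+1,n]})). -/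

import Mathlib

noncomputable section

/-- Euclidean space `ℝ^m`. -/
abbrev Euc (m : ℕ) : Type := EuclideanSpace ℝ (Fin m)

variable {m : ℕ}

/-- `projGS B s` is the orthogonal projection `π_{s+1}` onto the subspace orthogonal to
`b_1, …, b_s` (0-based: orthogonal to `B 0, …, B (s-1)`). -/
def projGS (B : ℕ → Euc m) (s : ℕ) (x : Euc m) : Euc m :=
  (Submodule.orthogonalProjectionOnto ((Submodule.span ℝ (B '' Set.Iio s))ᗮ) x : Euc m)

/-- The Gram–Schmidt vector `b*_{i+1}` (0-based index `i`). -/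
def gsoVec (B : ℕ → Euc m) (i : ℕ) : Euc m := projGS B i (B i)

/-- The projected block `B_{[s+1, s+ℓ]}` (0-based start `s`; the length is supplied
separately to the predicates below). -/
def block (B : ℕ → Euc m) (s : ℕ) : ℕ → Euc m := fun t => projGS B s (B (s + t))

/-- Gram matrix of the first `ℓ` vectors. -/
def gram (B : ℕ → Euc m) (ℓ : ℕ) : Matrix (Fin ℓ) (Fin ℓ) ℝ :=
  Matrix.of fun i j => (inner ℝ (B i) (B j) : ℝ)

/-- `vol(L(B)) = det(BᵀB)^{1/2}` for the first `ℓ` vectors. -/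
def volB (B : ℕ → Euc m) (ℓ : ℕ) : ℝ := Real.sqrt (gram B ℓ).det

/-- The lattice generated by the first `ℓ` vectors. -/
def latticeSpan (B : ℕ → Euc m) (ℓ : ℕ) : Submodule ℤ (Euc m) :=
  Submodule.span ℤ (B '' Set.Iio ℓ)

/-- `λ₁(L)`: the minimum norm of a nonzero lattice vector. -/
def lambda1 (L : Submodule ℤ (Euc m)) : ℝ :=
  sInf {r : ℝ | ∃ x ∈ L, x ≠ 0 ∧ ‖x‖ = r}

/-- `B` (of rank `ℓ`) is `δ`-SVP-reduced. -/
def SVPReduced (δ : ℝ) (B : ℕ → Euc m) (ℓ : ℕ) : Prop :=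
  ‖B 0‖ ≤ δ * lambda1 (latticeSpan B ℓ)

/-- `B` (of rank `ℓ`) is `δ`-HSVP-reduced. -/
def HSVPReduced (δ : ℝ) (B : ℕ → Euc m) (ℓ : ℕ) : Prop :=
  ‖B 0‖ ≤ δ * volB B ℓ ^ ((1 : ℝ) / ℓ)

/-- The dual basis `B^× = B (BᵀB)⁻¹` of the first `ℓ` vectors (extended by `0`). -/
def dualFam (B : ℕ → Euc m) (ℓ : ℕ) : ℕ → Euc m := fun i =>
  if h : i < ℓ then ∑ j : Fin ℓ, ((gram B ℓ)⁻¹ j ⟨i, h⟩) • B j else 0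

/-- The reversed dual basis `B^{-s}`. -/
def revDual (B : ℕ → Euc m) (ℓ : ℕ) : ℕ → Euc m := fun i => dualFam B ℓ (ℓ - 1 - i)

/-- `B` (of rank `ℓ`) is `δ`-DHSVP-reduced: its reversed dual basis is `δ`-HSVP-reduced. -/
def DHSVPReduced (δ : ℝ) (B : ℕ → Euc m) (ℓ : ℕ) : Prop :=
  HSVPReduced δ (revDual B ℓ) ℓ

/-- `B = (b_1, …, b_{d+1})` is `δ`-twin-reduced: `B_{[1,d]}` is `δ`-HSVP-reduced and
`B_{[2,d+1]}` is `δ`-DHSVP-reduced. -/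
def TwinReduced (δ : ℝ) (B : ℕ → Euc m) (d : ℕ) : Prop :=
  HSVPReduced δ (block B 0) d ∧ DHSVPReduced δ (block B 1) d

/-- Gram–Schmidt coefficient `μ_{i,j}` (0-based). -/
def mu (B : ℕ → Euc m) (i j : ℕ) : ℝ :=
  (inner ℝ (B i) (gsoVec B j) : ℝ) / ‖gsoVec B j‖ ^ 2

/-- The first `ℓ` vectors are size-reduced. -/
def SizeReduced (B : ℕ → Euc m) (ℓ : ℕ) : Prop :=
  ∀ i j, j < i → i < ℓ → |mu B i j| ≤ 1 / 2

/-- The first `ℓ` vectors are `ε`-LLL-reduced. -/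
def LLLReduced (ε : ℝ) (B : ℕ → Euc m) (ℓ : ℕ) : Prop :=
  SizeReduced B ℓ ∧
    ∀ i, 0 < i → i < ℓ →
      ‖gsoVec B (i - 1)‖ ^ 2 ≤ (1 + ε) * ‖mu B i (i - 1) • gsoVec B (i - 1) + gsoVec B i‖ ^ 2

/-- `B` (of rank `ℓ`) is `δ`-DSVP-reduced: its reversed dual basis is `δ`-SVP-reduced
and `B` is `(1/3)`-LLL-reduced. -/
def DSVPReduced (δ : ℝ) (B : ℕ → Euc m) (ℓ : ℕ) : Prop :=
  SVPReduced δ (revDual B ℓ) ℓ ∧ LLLReduced (1 / 3) B ℓ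

/-- `γ` is an admissible Hermite bound for rank `r`: every lattice generated by `r`
linearly independent vectors of a Euclidean space satisfies `λ₁² ≤ γ · vol^{2/r}`. -/
def IsHermiteBound (γ : ℝ) (r : ℕ) : Prop :=
  ∀ (m' : ℕ) (v : ℕ → Euc m'), LinearIndependent ℝ (fun i : Fin r => v i) →
    lambda1 (latticeSpan v r) ^ 2 ≤ γ * volB v r ^ ((2 : ℝ) / r)



-- Auxiliary machinery
open Submodule in
/-- Span of the first `s` vectors. -/
def spanU (B : ℕ → Euc m) (s : ℕ) : Submodule ℝ (Euc m) :=
  Submodule.span ℝ (B '' Set.Iio s)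

lemma projGS_eq (B : ℕ → Euc m) (s : ℕ) (x : Euc m) :
    projGS B s x = x - (Submodule.orthogonalProjectionOnto (spanU B s) x : Euc m) := by
  simp [projGS, spanU]
  rfl

lemma projGS_mem_orth (B : ℕ → Euc m) (s : ℕ) (x : Euc m) :
    projGS B s x ∈ (spanU B s)ᗮ := by
  exact (Submodule.orthogonalProjectionOnto ((spanU B s)ᗮ) x).2

lemma spanU_mono (B : ℕ → Euc m) {s s' : ℕ} (h : s ≤ s') : spanU B s ≤ spanU B s' :=
  Submodule.span_mono (Set.image_mono (Set.Iio_subset_Iio (by exact_mod_cast h)))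

lemma projGS_add (B : ℕ → Euc m) (s : ℕ) (x y : Euc m) :
    projGS B s (x + y) = projGS B s x + projGS B s y := by
  simp [projGS]

lemma projGS_smul (B : ℕ → Euc m) (s : ℕ) (c : ℝ) (x : Euc m) :
    projGS B s (c • x) = c • projGS B s x := by
  simp [projGS]

lemma projGS_sum (B : ℕ → Euc m) (s : ℕ) {ι : Type*} (t : Finset ι) (f : ι → Euc m) :
    projGS B s (∑ i ∈ t, f i) = ∑ i ∈ t, projGS B s (f i) := by
  simp [projGS]

lemma projGS_of_mem (B : ℕ → Euc m) {s : ℕ} {x : Euc m} (hx : x ∈ spanU B s) :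
    projGS B s x = 0 := by
  have : x ∈ ((spanU B s)ᗮ)ᗮ := (spanU B s).le_orthogonal_orthogonal hx
  exact
    congrArg (Subtype.val) (Submodule.orthogonalProjectionOnto_apply_of_mem_orthogonal this)

lemma projGS_of_mem_orth (B : ℕ → Euc m) {s : ℕ} {x : Euc m} (hx : x ∈ (spanU B s)ᗮ) :
    projGS B s x = x := by
  exact
    congrArg (Subtype.val) (Submodule.orthogonalProjectionOnto_mem_subspace_eq_self (⟨x, hx⟩ : (spanU B s)ᗮ))

lemma sub_projGS_mem (B : ℕ → Euc m) (s : ℕ) (x : Euc m) :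
    x - projGS B s x ∈ spanU B s := by
  rw [projGS_eq]
  simpa using ((Submodule.orthogonalProjectionOnto (spanU B s) x)).2

lemma projGS_comp (B : ℕ → Euc m) {s s' : ℕ} (h : s ≤ s') (x : Euc m) :
    projGS B s' (projGS B s x) = projGS B s' x := by
  have h2 : projGS B s' (x - projGS B s x) = 0 :=
    projGS_of_mem B (spanU_mono B h (sub_projGS_mem B s x))
  have h3 := projGS_add B s' (projGS B s x) (x - projGS B s x)
  rw [h2, add_zero] at h3
  have h4 : projGS B s x + (x - projGS B s x) = x := by abel
  rw [h4] at h3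
  exact h3.symm

lemma B_mem_spanU (B : ℕ → Euc m) {w s : ℕ} (h : w < s) : B w ∈ spanU B s :=
  Submodule.subset_span ⟨w, h, rfl⟩

lemma block_mem_spanU (B : ℕ → Euc m) {s u w : ℕ} (h : s + u < w) :
    block B s u ∈ spanU B w := by
  rw [block, projGS_eq]
  exact Submodule.sub_mem _ (B_mem_spanU B h)
    ((spanU_mono B (le_of_lt (lt_of_le_of_lt (Nat.le_add_right s u) h)))
      (Submodule.orthogonalProjectionOnto (spanU B s) (B (s+u))).2)

lemma norm_projGS_le (B : ℕ → Euc m) (s : ℕ) (x : Euc m) : ‖projGS B s x‖ ≤ ‖x‖ := by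
  rw [projGS]
  calc ‖(Submodule.orthogonalProjectionOnto ((spanU B s)ᗮ) x : Euc m)‖
      ≤ 1 * ‖x‖ := (Submodule.orthogonalProjectionOnto ((spanU B s)ᗮ)).le_of_opNorm_le
        (Submodule.orthogonalProjectionOnto_norm_le _) x
    _ = ‖x‖ := one_mul _

lemma gsoVec_eq_block (B : ℕ → Euc m) (u : ℕ) : gsoVec B u = block B u 0 := rfl

lemma gsoVec_mem_spanU (B : ℕ → Euc m) {u w : ℕ} (h : u < w) : gsoVec B u ∈ spanU B w := by
  rw [gsoVec_eq_block]
  exact block_mem_spanU B (by omega)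

lemma inner_gsoVec_eq_zero (B : ℕ → Euc m) {u v : ℕ} (h : u ≠ v) :
    (inner ℝ (gsoVec B u) (gsoVec B v) : ℝ) = 0 := by
  rcases h.lt_or_gt with h' | h'
  · exact (projGS_mem_orth B v (B v)) _ (gsoVec_mem_spanU B h')
  · rw [real_inner_comm]
    exact (projGS_mem_orth B u (B u)) _ (gsoVec_mem_spanU B h')

lemma spanU_le_span_gso (B : ℕ → Euc m) : ∀ i, spanU B i ≤
    Submodule.span ℝ (gsoVec B '' Set.Iio i) := by
  intro i
  induction i using Nat.strong_induction_on with
  | _ i IH =>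
    rw [spanU, Submodule.span_le]
    rintro x ⟨w, hw, rfl⟩
    have h1 : B w = gsoVec B w + (B w - projGS B w (B w)) := by
      rw [gsoVec]; abel
    rw [h1]
    refine Submodule.add_mem _ (Submodule.subset_span ⟨w, hw, rfl⟩) ?_
    have h2 := sub_projGS_mem B w (B w)
    have h3 := IH w hw h2
    refine Submodule.span_mono ?_ h3
    exact Set.image_mono (Set.Iio_subset_Iio (le_of_lt hw))

lemma not_mem_spanU {n : ℕ} (B : ℕ → Euc m)
    (hB : LinearIndependent ℝ (fun i : Fin n => B i)) {i : ℕ} (hi : i < n) :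
    B i ∉ spanU B i := by
  have himg : B '' Set.Iio i = (fun j : Fin n => B j) '' {j : Fin n | (j : ℕ) < i} := by
    ext y
    constructor
    · rintro ⟨a, ha, rfl⟩
      exact ⟨⟨a, lt_trans ha hi⟩, ha, rfl⟩
    · rintro ⟨j, hj, rfl⟩
      exact ⟨j, hj, rfl⟩
  rw [spanU, himg]
  have := hB.notMem_span_image (x := ⟨i, hi⟩) (s := {j : Fin n | (j : ℕ) < i})
    (by simp)
  exact this

lemma gsoVec_ne_zero {n : ℕ} (B : ℕ → Euc m)
    (hB : LinearIndependent ℝ (fun i : Fin n => B i)) {i : ℕ} (hi : i < n) :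
    gsoVec B i ≠ 0 := by
  intro h0
  apply not_mem_spanU B hB hi
  have h1 : B i = B i - projGS B i (B i) := by
    rw [gsoVec] at h0; rw [h0]; abel
  rw [h1]
  exact sub_projGS_mem B i (B i)

lemma block_linearIndependent {n : ℕ} (B : ℕ → Euc m)
    (hB : LinearIndependent ℝ (fun i : Fin n => B i)) {s l : ℕ} (hsl : s + l ≤ n) :
    LinearIndependent ℝ (fun u : Fin l => block B s u) := by
  rw [Fintype.linearIndependent_iff]
  intro g hg
  by_contra hcon
  push_neg at hcon
  obtain ⟨u1, hu1⟩ := hcon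
  have hne : (Finset.univ.filter (fun u => g u ≠ 0)).Nonempty :=
    ⟨u1, by simp [hu1]⟩
  set F := Finset.univ.filter (fun u : Fin l => g u ≠ 0) with hF
  set u0 := F.max' hne with hu0
  have hgu0 : g u0 ≠ 0 := by
    have h := F.max'_mem hne
    simp only [hF, Finset.mem_filter] at h
    exact h.2
  have hmax : ∀ u : Fin l, g u ≠ 0 → u ≤ u0 := by
    intro u hu
    exact F.le_max' u (by simp [hF, hu])
  -- split the sum
  have hsplit : g u0 • block B s u0 = - ∑ u ∈ Finset.univ.erase u0, g u • block B s u := by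
    have := Finset.add_sum_erase Finset.univ (fun u => g u • block B s u) (Finset.mem_univ u0)
    rw [← this] at hg
    linear_combination (norm := module) hg
  have hmem : block B s u0 ∈ spanU B (s + u0) := by
    have h1 : block B s u0 = (g u0)⁻¹ • (g u0 • block B s u0) := by
      rw [smul_smul, inv_mul_cancel₀ hgu0, one_smul]
    rw [h1, hsplit]
    refine Submodule.smul_mem _ _ (Submodule.neg_mem _ (Submodule.sum_mem _ ?_))
    intro u hu
    rcases eq_or_ne (g u) 0 with h | h
    · rw [h, zero_smul]; exact Submodule.zero_mem _
    · refine Submodule.smul_mem _ _ (block_mem_spanU B ?_)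
      have h2 : (u : ℕ) ≤ (u0 : ℕ) := hmax u h
      have h3 : u ≠ u0 := Finset.ne_of_mem_erase hu
      have h5 : (u : ℕ) ≠ (u0 : ℕ) := fun he => h3 (Fin.ext he)
      omega
  -- contradiction
  apply not_mem_spanU B hB (show s + (u0 : ℕ) < n by have := u0.2; omega)
  have h4 : B (s + u0) = block B s u0 + (B (s + u0) - projGS B s (B (s + u0))) := by
    rw [block]; abel
  rw [h4]
  exact Submodule.add_mem _ hmem
    ((spanU_mono B (Nat.le_add_right s u0)) (sub_projGS_mem B s (B (s + u0))))

lemma projGS_zero (B : ℕ → Euc m) (s : ℕ) : projGS B s (0 : Euc m) = 0 := by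
  simp [projGS]

lemma projGS_maps_spanU (B : ℕ → Euc m) (s j : ℕ) {x : Euc m}
    (hx : x ∈ spanU B (s + j)) : projGS B s x ∈ spanU (block B s) j := by
  induction hx using Submodule.span_induction with
  | mem y hy =>
    obtain ⟨w, hw, rfl⟩ := hy
    rw [Set.mem_Iio] at hw
    rcases lt_or_ge w s with h | h
    · rw [projGS_of_mem B (B_mem_spanU B h)]
      exact Submodule.zero_mem _
    · obtain ⟨u, rfl⟩ := Nat.exists_eq_add_of_le h
      exact Submodule.subset_span ⟨u, Set.mem_Iio.mpr (by omega), rfl⟩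
  | zero => rw [projGS_zero]; exact Submodule.zero_mem _
  | add y z _ _ hy hz => rw [projGS_add]; exact Submodule.add_mem _ hy hz
  | smul c y _ hy => rw [projGS_smul]; exact Submodule.smul_mem _ _ hy

lemma gsoVec_block (B : ℕ → Euc m) (s j : ℕ) :
    gsoVec (block B s) j = gsoVec B (s + j) := by
  set C := block B s with hC
  set W := spanU C j with hW
  have hWU : W ≤ spanU B (s + j) := by
    rw [hW, spanU, Submodule.span_le]
    rintro x ⟨u, hu, rfl⟩
    rw [Set.mem_Iio] at hu
    exact block_mem_spanU B (by omega)
  have hgso_mem : gsoVec B (s + j) ∈ Wᗮ :=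
    (Submodule.orthogonal_le hWU) (projGS_mem_orth B (s + j) (B (s + j)))
  have hv : gsoVec B (s + j) = projGS B (s + j) (C j) := by
    rw [hC, block, gsoVec, projGS_comp B (Nat.le_add_right s j)]
  have hz_mem : C j - gsoVec B (s + j) ∈ W := by
    have h1 : C j - gsoVec B (s + j) ∈ spanU B (s + j) := by
      rw [hv]; exact sub_projGS_mem B (s + j) (C j)
    have h2 : C j - gsoVec B (s + j) ∈ (spanU B s)ᗮ := by
      refine Submodule.sub_mem _ ?_ ?_
      · exact projGS_mem_orth B s (B (s + j))
      · exact (Submodule.orthogonal_le (spanU_mono B (Nat.le_add_right s j)))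
          (projGS_mem_orth B (s + j) (B (s + j)))
    have h3 := projGS_maps_spanU B s j h1
    rwa [projGS_of_mem_orth B h2] at h3
  -- conclude by the characterization of the orthogonal projection
  have : (Submodule.orthogonalProjectionOnto (Wᗮ) (C j) : Euc m) = gsoVec B (s + j) := by
    rw [← Submodule.starProjection_apply]
    refine Submodule.eq_starProjection_of_mem_orthogonal hgso_mem ?_
    rw [Submodule.orthogonal_orthogonal]
    exact hz_mem
  exact this

/-- Representation of `C i` over Gram–Schmidt vectors with unitriangular coefficients. -/
lemma exists_triangular_rep (C : ℕ → Euc m) (l : ℕ) (i : Fin l) :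
    ∃ M : Fin l → ℝ, (∀ u : Fin l, (i : ℕ) < (u : ℕ) → M u = 0) ∧ M i = 1 ∧
      C i = ∑ u : Fin l, M u • gsoVec C u := by
  have hmem : C i - gsoVec C i ∈ Submodule.span ℝ (gsoVec C '' Set.Iio (i : ℕ)) :=
    spanU_le_span_gso C i (sub_projGS_mem C i (C i))
  have himg : gsoVec C '' Set.Iio (i : ℕ) =
      Set.range (fun v : Fin (i : ℕ) => gsoVec C (v : ℕ)) := by
    ext y
    constructor
    · rintro ⟨a, ha, rfl⟩
      rw [Set.mem_Iio] at ha
      exact ⟨⟨a, ha⟩, rfl⟩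
    · rintro ⟨v, rfl⟩
      exact ⟨v, Set.mem_Iio.mpr v.2, rfl⟩
  rw [himg, Submodule.mem_span_range_iff_exists_fun] at hmem
  obtain ⟨c, hc⟩ := hmem
  refine ⟨fun u => if h : (u : ℕ) < (i : ℕ) then c ⟨u, h⟩ else if u = i then 1 else 0,
    ?_, ?_, ?_⟩
  · intro u hu
    have hnl : ¬ ((u : ℕ) < (i : ℕ)) := by omega
    have hne : u ≠ i := by intro he; rw [he] at hu; omega
    show (if h : (u : ℕ) < (i : ℕ) then c ⟨u, h⟩ else if u = i then 1 else 0) = 0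
    rw [dif_neg hnl, if_neg hne]
  · show (if h : (i : ℕ) < (i : ℕ) then c ⟨i, h⟩ else if i = i then 1 else 0) = 1
    rw [dif_neg (by omega), if_pos rfl]
  · rw [← Finset.sum_filter_add_sum_filter_not Finset.univ (fun u : Fin l => (u : ℕ) < (i : ℕ))]
    have h1 : ∑ u ∈ Finset.univ.filter (fun u : Fin l => (u : ℕ) < (i : ℕ)),
        (if h : (u : ℕ) < (i : ℕ) then c ⟨u, h⟩ else if u = i then 1 else 0) • gsoVec C u
        = ∑ v : Fin (i : ℕ), c v • gsoVec C (v : ℕ) := by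
      refine Finset.sum_bij' (fun u hu => (⟨(u : ℕ), (Finset.mem_filter.mp hu).2⟩ : Fin (i : ℕ)))
        (fun v _ => (⟨(v : ℕ), lt_trans v.2 i.2⟩ : Fin l)) ?_ ?_ ?_ ?_ ?_
      · intro u hu; exact Finset.mem_univ _
      · intro v hv
        refine Finset.mem_filter.mpr ⟨Finset.mem_univ _, v.2⟩
      · intro u hu; exact Fin.ext rfl
      · intro v hv; exact Fin.ext rfl
      · intro u hu
        have h := (Finset.mem_filter.mp hu).2
        rw [dif_pos h]
    have h2 : ∑ u ∈ Finset.univ.filter (fun u : Fin l => ¬ (u : ℕ) < (i : ℕ)),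
        (if h : (u : ℕ) < (i : ℕ) then c ⟨u, h⟩ else if u = i then 1 else 0) • gsoVec C u
        = gsoVec C i := by
      rw [Finset.sum_congr rfl (g := fun u => if u = i then gsoVec C u else 0)]
      · rw [Finset.sum_ite_eq' _ i (fun u => gsoVec C u)]
        rw [if_pos (Finset.mem_filter.mpr ⟨Finset.mem_univ _, by omega⟩)]
      · intro u hu
        have h := (Finset.mem_filter.mp hu).2
        rw [dif_neg h]
        by_cases he : u = i
        · rw [if_pos he, if_pos he, one_smul]
        · rw [if_neg he, if_neg he, zero_smul]
    rw [h1, h2, hc]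
    abel

lemma gram_det_eq_prod (C : ℕ → Euc m) (l : ℕ) :
    (gram C l).det = ∏ u : Fin l, ‖gsoVec C (u : ℕ)‖ ^ 2 := by
  choose M hM0 hM1 hMrep using exists_triangular_rep C l
  set M' : Matrix (Fin l) (Fin l) ℝ := Matrix.of (fun i u => M i u) with hM'
  set D : Matrix (Fin l) (Fin l) ℝ :=
    Matrix.diagonal (fun u : Fin l => ‖gsoVec C (u : ℕ)‖ ^ 2) with hD
  have hgram : gram C l = M' * D * M'.transpose := by
    ext i j
    have : (inner ℝ (C i) (C j) : ℝ) =
        ∑ u : Fin l, M i u * M j u * ‖gsoVec C (u : ℕ)‖ ^ 2 := by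
      rw [hMrep i, hMrep j, sum_inner]
      refine Finset.sum_congr rfl ?_
      intro u _
      rw [real_inner_smul_left, inner_sum]
      have : ∑ v : Fin l, (inner ℝ (gsoVec C (u : ℕ)) (M j v • gsoVec C (v : ℕ)) : ℝ)
          = M j u * ‖gsoVec C (u : ℕ)‖ ^ 2 := by
        rw [Finset.sum_eq_single u]
        · rw [real_inner_smul_right, real_inner_self_eq_norm_sq]
        · intro v _ hvu
          rw [real_inner_smul_right, inner_gsoVec_eq_zero C
            (by exact fun h => hvu (Fin.ext h.symm)), mul_zero]
        · intro h; exact absurd (Finset.mem_univ u) h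
      rw [this]; ring
    rw [gram]
    simp only [Matrix.of_apply]
    rw [this]
    rw [Matrix.mul_assoc]
    rw [Matrix.mul_apply]
    refine Finset.sum_congr rfl ?_
    intro u _
    rw [Matrix.mul_apply]
    rw [Finset.sum_eq_single u]
    · rw [hD, Matrix.diagonal_apply_eq, Matrix.transpose_apply]
      simp only [hM', Matrix.of_apply]
      ring
    · intro v _ hvu
      rw [hD, Matrix.diagonal_apply_ne _ (Ne.symm hvu), zero_mul]
    · intro h; exact absurd (Finset.mem_univ u) h
  have hdetM' : M'.det = 1 := by
    have htri : ∀ i j : Fin l, i < j → M' i j = 0 := by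
      intro i j hij
      exact hM0 i j (by exact_mod_cast hij)
    rw [Matrix.det_of_lowerTriangular M' htri]
    have : ∀ i : Fin l, M' i i = 1 := fun i => hM1 i
    rw [Finset.prod_congr rfl (fun i _ => this i), Finset.prod_const_one]
  rw [hgram, Matrix.det_mul, Matrix.det_mul, Matrix.det_transpose, hdetM', one_mul, mul_one,
    hD, Matrix.det_diagonal]

lemma volB_eq_prod (C : ℕ → Euc m) (l : ℕ) :
    volB C l = ∏ u : Fin l, ‖gsoVec C (u : ℕ)‖ := by
  rw [volB, gram_det_eq_prod]
  have : ∏ u : Fin l, ‖gsoVec C (u : ℕ)‖ ^ 2 = (∏ u : Fin l, ‖gsoVec C (u : ℕ)‖) ^ 2 := by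
    rw [Finset.prod_pow]
  rw [this, Real.sqrt_sq (Finset.prod_nonneg (fun u _ => norm_nonneg _))]

lemma linearIndependent_of_gram_det (C : ℕ → Euc m) (l : ℕ)
    (h : (gram C l).det ≠ 0) : LinearIndependent ℝ (fun u : Fin l => C (u : ℕ)) := by
  rw [Fintype.linearIndependent_iff]
  intro g hg
  have hvm : Matrix.vecMul g (gram C l) = 0 := by
    funext j
    rw [Matrix.vecMul, dotProduct]
    have : ∀ u : Fin l, g u * gram C l u j = (inner ℝ (g u • C (u : ℕ)) (C (j : ℕ)) : ℝ) := by
      intro u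
      rw [real_inner_smul_left, gram]; rfl
    rw [Finset.sum_congr rfl (fun u _ => this u), ← sum_inner, hg, inner_zero_left]
    rfl
  have hunit : IsUnit (gram C l).det := isUnit_iff_ne_zero.mpr h
  have := congrArg (fun v => Matrix.vecMul v (gram C l)⁻¹) hvm
  simp only [Matrix.vecMul_vecMul, Matrix.mul_nonsing_inv _ hunit, Matrix.vecMul_one,
    Matrix.zero_vecMul] at this
  intro u
  rw [this]
  rfl

lemma gram_transpose (C : ℕ → Euc m) (l : ℕ) : (gram C l).transpose = gram C l := by
  ext i j
  simp only [Matrix.transpose_apply, gram, Matrix.of_apply]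
  exact real_inner_comm _ _

lemma gram_det_pos (C : ℕ → Euc m) (l : ℕ)
    (hli : LinearIndependent ℝ (fun u : Fin l => C (u : ℕ))) : 0 < (gram C l).det := by
  rw [gram_det_eq_prod]
  refine Finset.prod_pos ?_
  intro u _
  have := gsoVec_ne_zero C hli u.2
  exact pow_pos (norm_pos_iff.mpr this) 2

lemma dualFam_apply (C : ℕ → Euc m) (l : ℕ) (i : Fin l) :
    dualFam C l (i : ℕ) = ∑ j : Fin l, ((gram C l)⁻¹ j i) • C (j : ℕ) := by
  rw [dualFam, dif_pos i.2]

lemma inner_dualFam_C (C : ℕ → Euc m) (l : ℕ) (hdet : IsUnit (gram C l).det)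
    (i j : Fin l) :
    (inner ℝ (dualFam C l (i : ℕ)) (C (j : ℕ)) : ℝ) = if i = j then 1 else 0 := by
  rw [dualFam_apply, sum_inner]
  have h1 : ∀ j' : Fin l, (inner ℝ (((gram C l)⁻¹ j' i) • C (j' : ℕ)) (C (j : ℕ)) : ℝ)
      = (gram C l) j j' * (gram C l)⁻¹ j' i := by
    intro j'
    rw [real_inner_smul_left]
    have : (inner ℝ (C (j' : ℕ)) (C (j : ℕ)) : ℝ) = gram C l j j' := by
      rw [gram, Matrix.of_apply, real_inner_comm]
    rw [this]; ring
  rw [Finset.sum_congr rfl (fun j' _ => h1 j')]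
  have : ∑ j' : Fin l, (gram C l) j j' * (gram C l)⁻¹ j' i
      = ((gram C l) * (gram C l)⁻¹) j i := by rw [Matrix.mul_apply]
  rw [this, Matrix.mul_nonsing_inv _ hdet, Matrix.one_apply]
  by_cases h : i = j
  · rw [if_pos h, if_pos h.symm]
  · rw [if_neg h, if_neg (fun he => h he.symm)]

lemma inner_gram_inv_symm (C : ℕ → Euc m) (l : ℕ) (i j : Fin l) :
    (gram C l)⁻¹ i j = (gram C l)⁻¹ j i := by
  have h := Matrix.transpose_nonsing_inv (gram C l)
  rw [gram_transpose] at h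
  calc (gram C l)⁻¹ i j = ((gram C l)⁻¹).transpose j i := rfl
    _ = (gram C l)⁻¹ j i := by rw [h]

lemma inner_dualFam_dualFam (C : ℕ → Euc m) (l : ℕ) (hdet : IsUnit (gram C l).det)
    (i j : Fin l) :
    (inner ℝ (dualFam C l (i : ℕ)) (dualFam C l (j : ℕ)) : ℝ) = (gram C l)⁻¹ i j := by
  rw [dualFam_apply C l i, sum_inner]
  have h1 : ∀ j' : Fin l, (inner ℝ (((gram C l)⁻¹ j' i) • C (j' : ℕ)) (dualFam C l (j : ℕ)) : ℝ)
      = (gram C l)⁻¹ j' i * (if j = j' then 1 else 0) := by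
    intro j'
    rw [real_inner_smul_left, real_inner_comm, inner_dualFam_C C l hdet j j']
  rw [Finset.sum_congr rfl (fun j' _ => h1 j')]
  rw [Finset.sum_congr rfl (fun j' _ => by rw [mul_ite, mul_one, mul_zero])]
  rw [Finset.sum_ite_eq _ j (fun j' => (gram C l)⁻¹ j' i)]
  rw [if_pos (Finset.mem_univ j), inner_gram_inv_symm]

/-- Reversal equivalence on `Fin l`. -/
def revEquiv (l : ℕ) : Fin l ≃ Fin l where
  toFun i := ⟨l - 1 - i, by omega⟩
  invFun i := ⟨l - 1 - i, by omega⟩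
  left_inv i := by have := i.2; exact Fin.ext (by simp; omega)
  right_inv i := by have := i.2; exact Fin.ext (by simp; omega)

lemma gram_revDual (C : ℕ → Euc m) (l : ℕ) (hdet : IsUnit (gram C l).det) :
    gram (revDual C l) l = ((gram C l)⁻¹).submatrix (revEquiv l) (revEquiv l) := by
  ext i j
  rw [gram, Matrix.of_apply, Matrix.submatrix_apply]
  have h1 : revDual C l (i : ℕ) = dualFam C l ((revEquiv l i : Fin l) : ℕ) := rfl
  have h2 : revDual C l (j : ℕ) = dualFam C l ((revEquiv l j : Fin l) : ℕ) := rfl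
  rw [h1, h2, inner_dualFam_dualFam C l hdet]

lemma gram_revDual_det (C : ℕ → Euc m) (l : ℕ) (hdet : IsUnit (gram C l).det) :
    (gram (revDual C l) l).det = ((gram C l).det)⁻¹ := by
  rw [gram_revDual C l hdet, Matrix.det_submatrix_equiv_self, Matrix.det_nonsing_inv,
    Ring.inverse_eq_inv']

lemma volB_revDual (C : ℕ → Euc m) (l : ℕ) (hdet : IsUnit (gram C l).det) :
    volB (revDual C l) l = (volB C l)⁻¹ := by
  rw [volB, volB, gram_revDual_det C l hdet, Real.sqrt_inv]

lemma linearIndependent_revDual (C : ℕ → Euc m) (l : ℕ) (hdet : IsUnit (gram C l).det) :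
    LinearIndependent ℝ (fun i : Fin l => revDual C l (i : ℕ)) := by
  apply linearIndependent_of_gram_det
  rw [gram_revDual_det C l hdet]
  have := hdet.ne_zero
  exact inv_ne_zero this

lemma span_range_eq_spanU (C : ℕ → Euc m) (l : ℕ) :
    Submodule.span ℝ (Set.range (fun u : Fin l => C (u : ℕ))) = spanU C l := by
  rw [spanU]
  congr 1
  ext y
  constructor
  · rintro ⟨u, rfl⟩
    exact ⟨u, Set.mem_Iio.mpr u.2, rfl⟩
  · rintro ⟨a, ha, rfl⟩
    rw [Set.mem_Iio] at ha
    exact ⟨⟨a, ha⟩, rfl⟩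

lemma eq_of_mem_span_of_inner_eq (C : ℕ → Euc m) (l : ℕ) {u v : Euc m}
    (hu : u ∈ spanU C l) (hv : v ∈ spanU C l)
    (h : ∀ j : Fin l, (inner ℝ u (C (j : ℕ)) : ℝ) = inner ℝ v (C (j : ℕ))) : u = v := by
  have hd : u - v ∈ spanU C l := Submodule.sub_mem _ hu hv
  have horth : u - v ∈ (spanU C l)ᗮ := by
    rw [Submodule.mem_orthogonal]
    intro w hw
    induction hw using Submodule.span_induction with
    | mem y hy =>
      obtain ⟨a, ha, rfl⟩ := hy
      rw [Set.mem_Iio] at ha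
      rw [real_inner_comm, inner_sub_left, h ⟨a, ha⟩, sub_self]
    | zero => rw [inner_zero_left]
    | add y z _ _ hy hz => rw [inner_add_left, hy, hz, add_zero]
    | smul c y _ hy => rw [real_inner_smul_left, hy, mul_zero]
  have := Submodule.inner_right_of_mem_orthogonal hd horth
  rwa [inner_self_eq_zero, sub_eq_zero] at this

lemma dualFam_last (C : ℕ → Euc m) (l : ℕ) (hl : 1 ≤ l)
    (hli : LinearIndependent ℝ (fun u : Fin l => C (u : ℕ))) :
    dualFam C l (l - 1) = (‖gsoVec C (l - 1)‖ ^ 2)⁻¹ • gsoVec C (l - 1) := by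
  have hdet : IsUnit (gram C l).det := isUnit_iff_ne_zero.mpr (gram_det_pos C l hli).ne'
  set g := gsoVec C (l - 1) with hg
  have hgne : g ≠ 0 := gsoVec_ne_zero C hli (by omega)
  have hgnorm : ‖g‖ ^ 2 ≠ 0 := pow_ne_zero 2 (norm_ne_zero_iff.mpr hgne)
  set i : Fin l := ⟨l - 1, by omega⟩ with hi
  refine eq_of_mem_span_of_inner_eq C l ?_ ?_ ?_
  · have h1 : dualFam C l (l - 1) = dualFam C l (i : ℕ) := rfl
    rw [h1, dualFam_apply]
    refine Submodule.sum_mem _ ?_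
    intro j _
    exact Submodule.smul_mem _ _ (B_mem_spanU C j.2)
  · exact Submodule.smul_mem _ _ (gsoVec_mem_spanU C (by omega))
  · intro j
    have h1 : (inner ℝ (dualFam C l (l - 1)) (C (j : ℕ)) : ℝ) = if i = j then 1 else 0 :=
      inner_dualFam_C C l hdet i j
    rw [h1]
    have h2 : (inner ℝ ((‖g‖ ^ 2)⁻¹ • g) (C (j : ℕ)) : ℝ) = (‖g‖ ^ 2)⁻¹ * inner ℝ g (C (j : ℕ)) :=
      real_inner_smul_left _ _ _
    rw [h2]
    by_cases hji : i = j
    · have hjv : (j : ℕ) = l - 1 := by rw [← hji]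
      have hrep : C (j : ℕ) = g + (C (l - 1) - projGS C (l - 1) (C (l - 1))) := by
        rw [hjv, hg, gsoVec]; abel
      have hperp : (inner ℝ g (C (l - 1) - projGS C (l - 1) (C (l - 1))) : ℝ) = 0 := by
        rw [real_inner_comm]
        exact (projGS_mem_orth C (l - 1) (C (l - 1))) _ (sub_projGS_mem C (l - 1) (C (l - 1)))
      rw [hrep, inner_add_right, hperp, add_zero, real_inner_self_eq_norm_sq]
      rw [if_pos hji]
      field_simp
    · rw [if_neg hji]
      have hjlt : (j : ℕ) < l - 1 := by
        have := j.2
        have : (j : ℕ) ≠ l - 1 := fun he => hji (Fin.ext (by rw [he]))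
        omega
      have : (inner ℝ g (C (j : ℕ)) : ℝ) = 0 := by
        rw [hg, gsoVec, real_inner_comm]
        exact (projGS_mem_orth C (l - 1) (C (l - 1))) _ (B_mem_spanU C hjlt)
      rw [this, mul_zero]

lemma norm_revDual_zero (C : ℕ → Euc m) (l : ℕ) (hl : 1 ≤ l)
    (hli : LinearIndependent ℝ (fun u : Fin l => C (u : ℕ))) :
    ‖revDual C l 0‖ = ‖gsoVec C (l - 1)‖⁻¹ := by
  have h1 : revDual C l 0 = dualFam C l (l - 1) := by rw [revDual]; norm_num
  rw [h1, dualFam_last C l hl hli, norm_smul]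
  have hgne : gsoVec C (l - 1) ≠ 0 := gsoVec_ne_zero C hli (by omega)
  have hpos : 0 < ‖gsoVec C (l - 1)‖ := norm_pos_iff.mpr hgne
  rw [Real.norm_eq_abs, abs_inv, abs_pow, abs_norm]
  rw [pow_two]
  field_simp

lemma lambda1_nonneg (L : Submodule ℤ (Euc m)) : 0 ≤ lambda1 L := by
  apply Real.sInf_nonneg
  rintro r ⟨x, _, _, rfl⟩
  exact norm_nonneg x

lemma lambda1_le {L : Submodule ℤ (Euc m)} {x : Euc m} (hx : x ∈ L) (hx0 : x ≠ 0) :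
    lambda1 L ≤ ‖x‖ := by
  apply csInf_le
  · exact ⟨0, by rintro r ⟨y, _, _, rfl⟩; exact norm_nonneg y⟩
  · exact ⟨x, hx, hx0, rfl⟩

lemma le_lambda1 {L : Submodule ℤ (Euc m)} {c : ℝ} {x0 : Euc m} (hx0 : x0 ∈ L) (hx00 : x0 ≠ 0)
    (h : ∀ x ∈ L, x ≠ 0 → c ≤ ‖x‖) : c ≤ lambda1 L := by
  apply le_csInf
  · exact ⟨‖x0‖, x0, hx0, hx00, rfl⟩
  · rintro r ⟨y, hy, hy0, rfl⟩
    exact h y hy hy0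

lemma hermite_lambda1_le {γ : ℝ} {k : ℕ} (hγ : 0 ≤ γ) (hH : IsHermiteBound γ k)
    (v : ℕ → Euc m) (hli : LinearIndependent ℝ (fun i : Fin k => v (i : ℕ))) :
    lambda1 (latticeSpan v k) ≤ Real.sqrt γ * volB v k ^ ((1 : ℝ) / k) := by
  have h1 := hH m v hli
  have hvol : 0 ≤ volB v k := Real.sqrt_nonneg _
  have h2 : volB v k ^ ((2 : ℝ) / k) = (volB v k ^ ((1 : ℝ) / k)) ^ (2 : ℕ) := by
    rw [← Real.rpow_natCast (volB v k ^ ((1 : ℝ) / k)) 2, ← Real.rpow_mul hvol]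
    congr 1
    push_cast
    ring
  have h3 : lambda1 (latticeSpan v k) ^ 2 ≤ (Real.sqrt γ * volB v k ^ ((1 : ℝ) / k)) ^ 2 := by
    rw [mul_pow, Real.sq_sqrt hγ]
    rw [h2] at h1
    exact h1
  have h4 : 0 ≤ Real.sqrt γ * volB v k ^ ((1 : ℝ) / k) :=
    mul_nonneg (Real.sqrt_nonneg _) (Real.rpow_nonneg hvol _)
  have h0 := lambda1_nonneg (latticeSpan v k)
  nlinarith [h3, h4, h0]

lemma one_step {n k : ℕ} (B : ℕ → Euc m)
    (hB : LinearIndependent ℝ (fun i : Fin n => B (i : ℕ)))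
    (hk : 2 ≤ k) {s : ℕ} (hs : s + k + 1 ≤ n) {δ γ : ℝ} (hδ : 1 ≤ δ) (hγ : 1 ≤ γ)
    (hH : IsHermiteBound γ k)
    (hP : SVPReduced δ (block B s) k)
    (hD : SVPReduced δ (revDual (block B (s + 1)) k) k) :
    ‖gsoVec B s‖ ≤ (δ ^ 2 * γ) ^ ((k : ℝ) / ((k : ℝ) - 1)) * ‖gsoVec B (s + k)‖ := by
  have hγ0 : (0 : ℝ) ≤ γ := le_trans zero_le_one hγ
  have hδ0 : (0 : ℝ) < δ := lt_of_lt_of_le zero_lt_one hδ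
  set c : ℝ := δ * Real.sqrt γ with hc
  have hc1 : 1 ≤ c := one_le_mul_of_one_le_of_one_le hδ (Real.one_le_sqrt.mpr hγ)
  have hc0 : 0 < c := lt_of_lt_of_le zero_lt_one hc1
  have hcsq : c ^ 2 = δ ^ 2 * γ := by
    rw [hc, mul_pow, Real.sq_sqrt hγ0]
  -- the two blocks are linearly independent
  have hliC : LinearIndependent ℝ (fun u : Fin k => block B s (u : ℕ)) :=
    block_linearIndependent B hB (by omega)
  have hliC' : LinearIndependent ℝ (fun u : Fin k => block B (s + 1) (u : ℕ)) :=
    block_linearIndependent B hB (by omega)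
  have hdet' : IsUnit (gram (block B (s + 1)) k).det :=
    isUnit_iff_ne_zero.mpr (gram_det_pos _ k hliC').ne'
  -- Gram–Schmidt norms
  set g : ℕ → ℝ := fun j => ‖gsoVec B (s + j)‖ with hgdef
  have hgpos : ∀ j, j ≤ k → 0 < g j := by
    intro j hj
    exact norm_pos_iff.mpr (gsoVec_ne_zero B hB (by omega))
  -- volumes
  set V : ℝ := volB (block B s) k with hV
  set V' : ℝ := volB (block B (s + 1)) k with hV'
  have hVeq : V = ∏ j ∈ Finset.range k, g j := by
    rw [hV, volB_eq_prod, Fin.prod_univ_eq_prod_range (fun j => ‖gsoVec (block B s) j‖) k]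
    refine Finset.prod_congr rfl ?_
    intro j _
    rw [gsoVec_block]
  have hV'eq : V' = ∏ j ∈ Finset.range k, g (j + 1) := by
    rw [hV', volB_eq_prod, Fin.prod_univ_eq_prod_range (fun j => ‖gsoVec (block B (s + 1)) j‖) k]
    refine Finset.prod_congr rfl ?_
    intro j _
    rw [gsoVec_block]
    have : s + 1 + j = s + (j + 1) := by omega
    rw [this]
  have hVpos : 0 < V := by
    rw [hVeq]; exact Finset.prod_pos (fun j hj => hgpos j (le_of_lt (Finset.mem_range.mp hj)))
  have hV'pos : 0 < V' := by
    rw [hV'eq]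
    exact Finset.prod_pos (fun j hj => hgpos (j + 1) (Finset.mem_range.mp hj))
  -- key product identity : V * g k = g 0 * V'
  have hprod : V * g k = g 0 * V' := by
    have h1 : V * g k = ∏ j ∈ Finset.range (k + 1), g j := by
      rw [hVeq, Finset.prod_range_succ]
    have h2 : g 0 * V' = ∏ j ∈ Finset.range (k + 1), g j := by
      rw [hV'eq, Finset.prod_range_succ']; ring
    rw [h1, h2]
  -- abbreviations
  set X : ℝ := V ^ ((1 : ℝ) / k) with hX
  set Y : ℝ := V' ^ ((1 : ℝ) / k) with hY
  have hXpos : 0 < X := Real.rpow_pos_of_pos hVpos _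
  have hYpos : 0 < Y := Real.rpow_pos_of_pos hV'pos _
  -- primal inequality : g 0 ≤ c * X
  have hA : g 0 ≤ c * X := by
    have h1 : g 0 ≤ δ * lambda1 (latticeSpan (block B s) k) := hP
    have h2 := hermite_lambda1_le hγ0 hH (block B s) hliC
    calc g 0 ≤ δ * lambda1 (latticeSpan (block B s) k) := h1
      _ ≤ δ * (Real.sqrt γ * X) := by
          refine mul_le_mul_of_nonneg_left ?_ hδ0.le
          rw [hX, hV]; exact h2
      _ = c * X := by rw [hc]; ring
  -- dual inequality : (g k)⁻¹ ≤ c * Y⁻¹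
  have hZinv : (g k)⁻¹ ≤ c * Y⁻¹ := by
    have hrev : ‖revDual (block B (s + 1)) k 0‖ = (g k)⁻¹ := by
      rw [norm_revDual_zero (block B (s + 1)) k (by omega) hliC', gsoVec_block]
      have : s + 1 + (k - 1) = s + k := by omega
      rw [this]
    have h1 : (g k)⁻¹ ≤ δ * lambda1 (latticeSpan (revDual (block B (s + 1)) k) k) := by
      rw [← hrev]; exact hD
    have h2 := hermite_lambda1_le hγ0 hH (revDual (block B (s + 1)) k)
      (linearIndependent_revDual _ k hdet')
    have h3 : volB (revDual (block B (s + 1)) k) k = V'⁻¹ := volB_revDual _ k hdet'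
    calc (g k)⁻¹ ≤ δ * lambda1 (latticeSpan (revDual (block B (s + 1)) k) k) := h1
      _ ≤ δ * (Real.sqrt γ * (V'⁻¹) ^ ((1 : ℝ) / k)) := by
          refine mul_le_mul_of_nonneg_left ?_ hδ0.le
          rw [← h3]; exact h2
      _ = c * Y⁻¹ := by
          rw [Real.inv_rpow hV'pos.le, hc, hY]; ring
  -- turn the dual inequality around : Y ≤ c * g k
  have hZpos : 0 < g k := hgpos k le_rfl
  have hApos : 0 < g 0 := hgpos 0 (by omega)
  have hYZ : Y ≤ c * g k := by
    have h5 : Y * (g k)⁻¹ ≤ Y * (c * Y⁻¹) := mul_le_mul_of_nonneg_left hZinv hYpos.le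
    have h6 : Y * (c * Y⁻¹) = c := by field_simp
    have h7 : Y * (g k)⁻¹ ≤ c := by rw [← h6]; exact h5
    have h8 := mul_le_mul_of_nonneg_right h7 hZpos.le
    rwa [mul_assoc, inv_mul_cancel₀ hZpos.ne', mul_one] at h8
  -- the ratio r and W
  set r : ℝ := g 0 / g k with hr
  set W : ℝ := X / Y with hW
  have hrpos : 0 < r := div_pos hApos hZpos
  have hWpos : 0 < W := div_pos hXpos hYpos
  have hkne : (k : ℝ) ≠ 0 := Nat.cast_ne_zero.mpr (by omega)
  have hXk : X ^ k = V := by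
    rw [hX, ← Real.rpow_natCast (V ^ ((1 : ℝ) / k)) k, ← Real.rpow_mul hVpos.le,
      one_div, inv_mul_cancel₀ hkne, Real.rpow_one]
  have hYk : Y ^ k = V' := by
    rw [hY, ← Real.rpow_natCast (V' ^ ((1 : ℝ) / k)) k, ← Real.rpow_mul hV'pos.le,
      one_div, inv_mul_cancel₀ hkne, Real.rpow_one]
  have hWk : W ^ k = r := by
    rw [hW, div_pow, hXk, hYk, hr]
    rw [div_eq_div_iff hV'pos.ne' hZpos.ne']
    exact hprod
  -- r ≤ c^2 * W
  have hrW : r ≤ c ^ 2 * W := by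
    have hXWY : X = W * Y := by rw [hW, div_mul_cancel₀ _ hYpos.ne']
    have hnum : g 0 ≤ c * W * Y := by rw [mul_assoc, ← hXWY]; exact hA
    have hden : Y / c ≤ g k := by
      rw [div_le_iff₀ hc0]
      calc Y ≤ c * g k := hYZ
        _ = g k * c := by ring
    have hdenpos : 0 < Y / c := div_pos hYpos hc0
    have h9 : g 0 / g k ≤ (c * W * Y) / (Y / c) :=
      div_le_div₀ (mul_nonneg (mul_nonneg hc0.le hWpos.le) hYpos.le) hnum hdenpos hden
    calc r = g 0 / g k := hr
      _ ≤ (c * W * Y) / (Y / c) := h9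
      _ = c ^ 2 * W := by field_simp
  -- W ^ (k-1) ≤ c ^ 2
  have hWk1 : W ^ (k - 1) ≤ c ^ 2 := by
    have h10 : W ^ (k - 1) * W ≤ c ^ 2 * W := by
      have : W ^ (k - 1) * W = W ^ k := by
        rw [← pow_succ]
        congr 1
        omega
      rw [this, hWk]
      exact hrW
    exact le_of_mul_le_mul_right h10 hWpos
  have hk1ne : ((k : ℝ) - 1) ≠ 0 := by
    have : (1 : ℝ) < (k : ℝ) := by exact_mod_cast (by omega : 1 < k)
    linarith
  have hcast : ((k - 1 : ℕ) : ℝ) = (k : ℝ) - 1 := by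
    push_cast [Nat.cast_sub (by omega : 1 ≤ k)]
    ring
  -- W ≤ (c^2) ^ (1/(k-1))
  have hW2 : W ≤ (c ^ 2) ^ ((1 : ℝ) / ((k : ℝ) - 1)) := by
    have h11 : W = (W ^ (k - 1 : ℕ)) ^ ((1 : ℝ) / ((k : ℝ) - 1)) := by
      rw [← Real.rpow_natCast W (k - 1), ← Real.rpow_mul hWpos.le, hcast,
        mul_one_div, div_self hk1ne, Real.rpow_one]
    rw [h11]
    have hexp : (0 : ℝ) ≤ 1 / ((k : ℝ) - 1) := by
      have h : (1 : ℝ) < (k : ℝ) := by exact_mod_cast (show 1 < k by omega)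
      have : (0 : ℝ) < (k : ℝ) - 1 := by linarith
      positivity
    exact Real.rpow_le_rpow (by positivity) hWk1 hexp
  -- conclude
  have hfinal : r ≤ (c ^ 2) ^ ((k : ℝ) / ((k : ℝ) - 1)) := by
    have h12 : r = W ^ k := hWk.symm
    have h13 : W ^ k ≤ ((c ^ 2) ^ ((1 : ℝ) / ((k : ℝ) - 1))) ^ k :=
      pow_le_pow_left₀ hWpos.le hW2 k
    have h14 : ((c ^ 2) ^ ((1 : ℝ) / ((k : ℝ) - 1))) ^ k
        = (c ^ 2) ^ ((k : ℝ) / ((k : ℝ) - 1)) := by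
      rw [← Real.rpow_natCast ((c ^ 2) ^ ((1 : ℝ) / ((k : ℝ) - 1))) k,
        ← Real.rpow_mul (by positivity)]
      congr 1
      field_simp
    rw [h12, ← h14]
    exact h13
  have : g 0 ≤ (c ^ 2) ^ ((k : ℝ) / ((k : ℝ) - 1)) * g k := by
    have h15 : g 0 = r * g k := by rw [hr, div_mul_cancel₀ _ hZpos.ne']
    rw [h15]
    exact mul_le_mul_of_nonneg_right hfinal hZpos.le
  rw [hcsq] at this
  exact this

lemma chain_bound {n k d p : ℕ} (B : ℕ → Euc m)
    (hB : LinearIndependent ℝ (fun i : Fin n => B (i : ℕ)))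
    (hk : 2 ≤ k) (hp : 1 ≤ p) (hn : n = p * k + d) {δ γk : ℝ} (hδ : 1 ≤ δ) (hγk : 1 ≤ γk)
    (hHk : IsHermiteBound γk k)
    (hprimal : ∀ i, i + 1 ≤ p → SVPReduced δ (block B (i * k + d)) k)
    (hdual : ∀ i, i + 2 ≤ p → DSVPReduced δ (block B (i * k + d + 1)) k) :
    ∀ t, t ≤ p - 1 →
      ‖gsoVec B d‖ ≤ ((δ ^ 2 * γk) ^ ((k : ℝ) / ((k : ℝ) - 1))) ^ t *
        ‖gsoVec B (d + t * k)‖ := by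
  intro t
  induction t with
  | zero =>
    intro _
    simp
  | succ t IH =>
    intro ht
    have ht' : t ≤ p - 1 := by omega
    have IH' := IH ht'
    -- apply one_step at s = d + t * k
    have hs : (d + t * k) + k + 1 ≤ n := by
      have h1 : (t + 2) * k ≤ p * k := Nat.mul_le_mul_right _ (by omega)
      have h2 : (t + 2) * k = t * k + 2 * k := by ring
      omega
    have hPt := hprimal t (by omega)
    have et : t * k + d = d + t * k := by ring
    rw [et] at hPt
    have hDt := (hdual t (by omega)).1
    have et2 : t * k + d + 1 = d + t * k + 1 := by rw [et]
    rw [et2] at hDt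
    have hstep := one_step B hB hk hs hδ hγk hHk hPt hDt
    have et3 : d + t * k + k = d + (t + 1) * k := by ring
    rw [et3] at hstep
    have hEpos : (0 : ℝ) < (δ ^ 2 * γk) ^ ((k : ℝ) / ((k : ℝ) - 1)) := by
      have : (0 : ℝ) < δ ^ 2 * γk := by nlinarith
      exact Real.rpow_pos_of_pos this _
    calc ‖gsoVec B d‖
        ≤ ((δ ^ 2 * γk) ^ ((k : ℝ) / ((k : ℝ) - 1))) ^ t * ‖gsoVec B (d + t * k)‖ := IH'
      _ ≤ ((δ ^ 2 * γk) ^ ((k : ℝ) / ((k : ℝ) - 1))) ^ t *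
          ((δ ^ 2 * γk) ^ ((k : ℝ) / ((k : ℝ) - 1)) * ‖gsoVec B (d + (t + 1) * k)‖) :=
          mul_le_mul_of_nonneg_left hstep (pow_nonneg hEpos.le t)
      _ = ((δ ^ 2 * γk) ^ ((k : ℝ) / ((k : ℝ) - 1))) ^ (t + 1) *
          ‖gsoVec B (d + (t + 1) * k)‖ := by ring

lemma latticeSpan_eq_range (C : ℕ → Euc m) (l : ℕ) :
    latticeSpan C l = Submodule.span ℤ (Set.range (fun u : Fin l => C (u : ℕ))) := by
  rw [latticeSpan]
  congr 1
  ext y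
  constructor
  · rintro ⟨a, ha, rfl⟩
    rw [Set.mem_Iio] at ha
    exact ⟨⟨a, ha⟩, rfl⟩
  · rintro ⟨u, rfl⟩
    exact ⟨u, Set.mem_Iio.mpr u.2, rfl⟩

/-- under the Gama–Nguyen slide-reduction conditions on the blocks of
`B_{[d+1,n]}`, the block `B_{[d+1,n]}` is `δ(δ²γ_k)^{(n-d-k)/(k-1)}`-SVP-reduced. -/
theorem gn_slide_svp {m k d p n : ℕ} (hp : 1 ≤ p) (hk : 2 ≤ k) (hkd : k ≤ d)
    (hn : n = p * k + d) {δ γk : ℝ} (hδ : 1 ≤ δ) (hγk : 1 ≤ γk)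
    (hHk : IsHermiteBound γk k)
    (B : ℕ → Euc m) (hB : LinearIndependent ℝ (fun i : Fin n => B i))
    (hprimal : ∀ i, i + 1 ≤ p → SVPReduced δ (block B (i * k + d)) k)
    (hdual : ∀ i, i + 2 ≤ p → DSVPReduced δ (block B (i * k + d + 1)) k) :
    ‖gsoVec B d‖ ≤ δ * (δ ^ 2 * γk) ^ (((n : ℝ) - d - k) / ((k : ℝ) - 1)) *
      lambda1 (latticeSpan (block B d) (n - d)) := by
  have hδ0 : (0 : ℝ) < δ := lt_of_lt_of_le zero_lt_one hδ
  have hbase1 : (1 : ℝ) ≤ δ ^ 2 * γk := by nlinarith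
  have hbase0 : (0 : ℝ) < δ ^ 2 * γk := by nlinarith
  set ℓ : ℕ := n - d with hℓ
  have hℓk : ℓ = p * k := by
    have h1 : 1 * k ≤ p * k := Nat.mul_le_mul_right _ hp
    omega
  have hdkn : d + k ≤ n := by
    have h1 : 1 * k ≤ p * k := Nat.mul_le_mul_right _ hp
    omega
  set K : ℝ := δ * (δ ^ 2 * γk) ^ (((n : ℝ) - d - k) / ((k : ℝ) - 1)) with hK
  have hKpos : 0 < K := mul_pos hδ0 (Real.rpow_pos_of_pos hbase0 _)
  have hx0ne : gsoVec B d ≠ 0 := gsoVec_ne_zero B hB (by omega)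
  have hx0mem : gsoVec B d ∈ latticeSpan (block B d) ℓ :=
    Submodule.subset_span ⟨0, Set.mem_Iio.mpr (by omega), rfl⟩
  -- pointwise claim
  have hpoint : ∀ x ∈ latticeSpan (block B d) ℓ, x ≠ 0 → ‖gsoVec B d‖ ≤ K * ‖x‖ := by
    intro x hx hxne
    rw [latticeSpan_eq_range, Submodule.mem_span_range_iff_exists_fun] at hx
    obtain ⟨z, hz⟩ := hx
    have hzr : ∑ u : Fin ℓ, ((z u : ℝ)) • block B d (u : ℕ) = x := by
      rw [← hz]
      exact Finset.sum_congr rfl (fun u _ => Int.cast_smul_eq_zsmul ℝ (z u) _)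
    have hzne : ∃ u, z u ≠ 0 := by
      by_contra h
      push_neg at h
      apply hxne
      rw [← hz]
      simp [h]
    obtain ⟨u1, hu1⟩ := hzne
    have hne : (Finset.univ.filter (fun u : Fin ℓ => z u ≠ 0)).Nonempty := ⟨u1, by simp [hu1]⟩
    set j := (Finset.univ.filter (fun u : Fin ℓ => z u ≠ 0)).max' hne with hj
    have hjne : z j ≠ 0 := by
      have h := (Finset.univ.filter (fun u : Fin ℓ => z u ≠ 0)).max'_mem hne
      simp only [Finset.mem_filter] at h
      exact h.2
    have hmax : ∀ u : Fin ℓ, z u ≠ 0 → u ≤ j := by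
      intro u hu
      exact Finset.le_max' _ u (by simp [hu])
    have hjℓ : (j : ℕ) < ℓ := j.2
    obtain ⟨t, htp, hjk1, hjk2⟩ :
        ∃ t, t ≤ p - 1 ∧ t * k ≤ (j : ℕ) ∧ (j : ℕ) < t * k + k := by
      refine ⟨(j : ℕ) / k, ?_, ?_, ?_⟩
      · have h1 : (j : ℕ) < p * k := by omega
        have h2 : (j : ℕ) / k < p := (Nat.div_lt_iff_lt_mul (by omega)).mpr h1
        omega
      · exact Nat.div_mul_le_self _ _
      · have hdm := Nat.div_add_mod (j : ℕ) k
        have hmlt : (j : ℕ) % k < k := Nat.mod_lt _ (by omega)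
        rw [Nat.mul_comm]
        omega
    have htkk : t * k + k ≤ ℓ := by
      have h1 : (t + 1) * k ≤ p * k := Nat.mul_le_mul_right _ (by omega)
      have h2 : (t + 1) * k = t * k + k := by ring
      omega
    set s : ℕ := d + t * k with hsdef
    have hskn : s + k ≤ n := by omega
    set y := projGS B s x with hy
    have hyx : ‖y‖ ≤ ‖x‖ := norm_projGS_le B s x
    have hallv : ∀ v : Fin k, t * k + (v : ℕ) < ℓ := by
      intro v
      have := v.2
      omega
    set zw : Fin k → ℤ := fun v => z ⟨t * k + (v : ℕ), hallv v⟩ with hzw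
    have hterm : ∀ u : Fin ℓ, projGS B s ((z u : ℝ) • block B d (u : ℕ))
        = (z u : ℝ) • projGS B s (B (d + (u : ℕ))) := by
      intro u
      rw [projGS_smul, block, projGS_comp B (Nat.le_add_right d (t * k))]
    have hyrep : y = ∑ v : Fin k, ((zw v : ℝ)) • block B s (v : ℕ) := by
      rw [hy, ← hzr, projGS_sum,
        Finset.sum_congr rfl (fun u _ => hterm u)]
      set T := Finset.univ.filter
        (fun u : Fin ℓ => t * k ≤ (u : ℕ) ∧ (u : ℕ) < t * k + k) with hT
      have hvanish : ∀ u ∈ Finset.univ (α := Fin ℓ), u ∉ T →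
          (z u : ℝ) • projGS B s (B (d + (u : ℕ))) = 0 := by
        intro u _ hu
        simp only [hT, Finset.mem_filter, Finset.mem_univ, true_and, not_and, not_lt] at hu
        rcases lt_or_ge (u : ℕ) (t * k) with h | h
        · rw [projGS_of_mem B (B_mem_spanU B (by omega)), smul_zero]
        · have h2 : t * k + k ≤ (u : ℕ) := hu h
          have h3 : z u = 0 := by
            by_contra h4
            have h5 : (u : ℕ) ≤ (j : ℕ) := hmax u h4
            omega
          rw [h3]
          simp
      rw [← Finset.sum_subset (Finset.subset_univ T) hvanish]
      refine Finset.sum_bij' (fun u hu => (⟨(u : ℕ) - t * k, by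
          have := (Finset.mem_filter.mp hu).2; omega⟩ : Fin k))
        (fun v _ => (⟨t * k + (v : ℕ), hallv v⟩ : Fin ℓ)) ?_ ?_ ?_ ?_ ?_
      · intro u hu
        exact Finset.mem_univ _
      · intro v hv
        have hv2 := v.2
        simp only [hT, Finset.mem_filter, Finset.mem_univ, true_and]
        constructor
        · show t * k ≤ t * k + (v : ℕ)
          omega
        · show t * k + (v : ℕ) < t * k + k
          omega
      · intro u hu
        have hu2 := (Finset.mem_filter.mp hu).2
        exact Fin.ext (show t * k + ((u : ℕ) - t * k) = (u : ℕ) by omega)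
      · intro v hv
        exact Fin.ext (show t * k + (v : ℕ) - t * k = (v : ℕ) by omega)
      · intro u hu
        have hu2 := (Finset.mem_filter.mp hu).2
        have hvlt : (u : ℕ) - t * k < k := by omega
        have hval : zw ⟨(u : ℕ) - t * k, hvlt⟩ = z u := by
          simp only [hzw]
          congr 1
          exact Fin.ext (show t * k + ((u : ℕ) - t * k) = (u : ℕ) by omega)
        show (z u : ℝ) • projGS B s (B (d + (u : ℕ)))
          = (zw ⟨(u : ℕ) - t * k, hvlt⟩ : ℝ) • block B s ((u : ℕ) - t * k)
        rw [hval, block]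
        have e2 : s + ((u : ℕ) - t * k) = d + (u : ℕ) := by omega
        rw [e2]
    have hymem : y ∈ latticeSpan (block B s) k := by
      have h1 : y = ∑ v : Fin k, zw v • block B s (v : ℕ) := by
        rw [hyrep]
        exact Finset.sum_congr rfl (fun v _ => Int.cast_smul_eq_zsmul ℝ (zw v) (block B s (v : ℕ)))
      rw [h1]
      refine Submodule.sum_mem _ ?_
      intro v _
      exact Submodule.smul_mem _ _
        (Submodule.subset_span ⟨(v : ℕ), Set.mem_Iio.mpr v.2, rfl⟩)
    have hyne : y ≠ 0 := by
      intro hy0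
      have hlin := block_linearIndependent B hB (show s + k ≤ n from hskn)
      rw [Fintype.linearIndependent_iff] at hlin
      have h1 : ∑ v : Fin k, ((zw v : ℝ)) • block B s (v : ℕ) = 0 := by
        rw [← hyrep]; exact hy0
      have hjtk : (j : ℕ) - t * k < k := by omega
      have h2 := hlin (fun v => (zw v : ℝ)) h1 ⟨(j : ℕ) - t * k, hjtk⟩
      have hzwj : zw ⟨(j : ℕ) - t * k, hjtk⟩ = z j := by
        simp only [hzw]
        congr 1
        exact Fin.ext (show t * k + ((j : ℕ) - t * k) = (j : ℕ) by omega)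
      rw [hzwj] at h2
      exact hjne (by exact_mod_cast h2)
    -- primal SVP bound on block t
    have hlam : lambda1 (latticeSpan (block B s) k) ≤ ‖y‖ := lambda1_le hymem hyne
    have hPt := hprimal t (by omega)
    have et : t * k + d = s := by rw [hsdef]; ring
    rw [et] at hPt
    have h1 : ‖gsoVec B s‖ ≤ δ * ‖y‖ := by
      calc ‖gsoVec B s‖ ≤ δ * lambda1 (latticeSpan (block B s) k) := hPt
        _ ≤ δ * ‖y‖ := mul_le_mul_of_nonneg_left hlam hδ0.le
    have h2 : ‖gsoVec B s‖ ≤ δ * ‖x‖ :=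
      le_trans h1 (mul_le_mul_of_nonneg_left hyx hδ0.le)
    -- chain bound
    have h3 := chain_bound B hB hk hp hn hδ hγk hHk hprimal hdual t htp
    rw [show d + t * k = s from rfl] at h3
    set E : ℝ := (δ ^ 2 * γk) ^ ((k : ℝ) / ((k : ℝ) - 1)) with hE
    have hk1pos : (0 : ℝ) < (k : ℝ) - 1 := by
      have h4 : (1 : ℝ) < (k : ℝ) := by exact_mod_cast (show 1 < k by omega)
      linarith
    have hEt : E ^ t ≤ (δ ^ 2 * γk) ^ (((n : ℝ) - d - k) / ((k : ℝ) - 1)) := by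
      have e1 : E ^ t = (δ ^ 2 * γk) ^ (((k : ℝ) / ((k : ℝ) - 1)) * t) := by
        rw [hE, ← Real.rpow_natCast ((δ ^ 2 * γk) ^ ((k : ℝ) / ((k : ℝ) - 1))) t,
          ← Real.rpow_mul hbase0.le]
      rw [e1]
      refine Real.rpow_le_rpow_of_exponent_le hbase1 ?_
      have hnat : t * k + k + d ≤ n := by omega
      have hcast : (t : ℝ) * k + k + d ≤ (n : ℝ) := by exact_mod_cast hnat
      rw [div_mul_eq_mul_div, div_le_div_iff₀ hk1pos hk1pos]
      nlinarith [hcast, hk1pos]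
    calc ‖gsoVec B d‖ ≤ E ^ t * ‖gsoVec B s‖ := h3
      _ ≤ E ^ t * (δ * ‖x‖) := by
          refine mul_le_mul_of_nonneg_left h2 ?_
          have : 0 < E := Real.rpow_pos_of_pos hbase0 _
          positivity
      _ ≤ (δ ^ 2 * γk) ^ (((n : ℝ) - d - k) / ((k : ℝ) - 1)) * (δ * ‖x‖) := by
          refine mul_le_mul_of_nonneg_right hEt ?_
          positivity
      _ = K * ‖x‖ := by rw [hK]; ring
  -- conclude via the infimum
  have hforall : ∀ x ∈ latticeSpan (block B d) ℓ, x ≠ 0 → ‖gsoVec B d‖ / K ≤ ‖x‖ := by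
    intro x hx hxne
    rw [div_le_iff₀ hKpos]
    calc ‖gsoVec B d‖ ≤ K * ‖x‖ := hpoint x hx hxne
      _ = ‖x‖ * K := by ring
  have hlow := le_lambda1 hx0mem hx0ne hforall
  have h := (div_le_iff₀ hKpos).mp hlow
  calc ‖gsoVec B d‖ ≤ lambda1 (latticeSpan (block B d) ℓ) * K := h
    _ = K * lambda1 (latticeSpan (block B d) ℓ) := by ring
end
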